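/- Every metrizable topological space that is weakly reversible is reversible. -/

import Mathlib

open Filter Topology Set

universe u

lemma aux_hyperfilter_not_cg :
    ¬ (Filter.hyperfilter ℕ : Filter ℕ).IsCountablyGenerated := by
  intro h
  obtain ⟨B, hB⟩ := (Filter.hyperfilter ℕ : Filter ℕ).exists_antitone_basis
  have hBmem : ∀ i, B i ∈ (Filter.hyperfilter ℕ : Filter ℕ) := fun i => hB.mem i
  have hBinf : ∀ i, (B i).Infinite := by
    intro i
    by_contra hfin
    rw [Set.not_infinite] at hfin
    exact Set.Finite.notMem_hyperfilter hfin (hBmem i)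
  have hex : ∀ (i b : ℕ), ∃ m, m ∈ B i ∧ b < m := by
    intro i b
    obtain ⟨m, hm, hbm⟩ := (hBinf i).exists_gt b
    exact ⟨m, hm, hbm⟩
  choose g hg1 hg2 using hex
  set k : ℕ → ℕ := fun i => Nat.rec (g 0 0) (fun i ih => g (i + 1) ih) i with hk
  have hk1 : ∀ i, k i ∈ B i := by
    intro i
    cases i with
    | zero => exact hg1 0 0
    | succ n => exact hg1 (n + 1) (k n)
  have hkmono : StrictMono k := strictMono_nat_of_lt_succ (fun i => hg2 (i + 1) (k i))
  set E : Set ℕ := Set.range (fun j => k (2 * j)) with hE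
  have hkE : ∀ i, k (2 * i) ∈ E := fun i => ⟨i, rfl⟩
  rcases (Filter.hyperfilter ℕ).mem_or_compl_mem E with hmem | hmem
  · obtain ⟨i, -, hsub⟩ := hB.1.mem_iff.mp hmem
    have : k (2 * i + 1) ∈ E := hsub (hB.2 (by omega) (hk1 (2 * i + 1)))
    obtain ⟨j, hj⟩ := this
    have h2 : 2 * j = 2 * i + 1 := hkmono.injective hj
    omega
  · obtain ⟨i, -, hsub⟩ := hB.1.mem_iff.mp hmem
    exact hsub (hB.2 (by omega) (hk1 (2 * i))) (hkE i)

/-- The topology obtained from `T` by gluing the sequence `s` to the point `a`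
along the ultrafilter `𝒰`. -/
def glueTop {X : Type u} (T : TopologicalSpace X) (𝒰 : Ultrafilter ℕ) (s : ℕ → X) (a : X) :
    TopologicalSpace X where
  IsOpen V := T.IsOpen V ∧ (a ∈ V → {n | s n ∈ V} ∈ (𝒰 : Filter ℕ))
  isOpen_univ := ⟨T.isOpen_univ, fun _ => Filter.univ_mem⟩
  isOpen_inter := by
    rintro V W ⟨hV1, hV2⟩ ⟨hW1, hW2⟩
    exact ⟨T.isOpen_inter V W hV1 hW1, fun haVW => Filter.inter_mem (hV2 haVW.1) (hW2 haVW.2)⟩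
  isOpen_sUnion := by
    intro C hC
    refine ⟨T.isOpen_sUnion C (fun V hV => (hC V hV).1), fun haC => ?_⟩
    obtain ⟨V, hVC, haV⟩ := haC
    exact Filter.mem_of_superset ((hC V hVC).2 haV) (fun n hn => ⟨V, hVC, hn⟩)

lemma glueTop_isOpen_iff {X : Type u} {T : TopologicalSpace X} {𝒰 : Ultrafilter ℕ} {s : ℕ → X}
    {a : X} {V : Set X} :
    @IsOpen X (glueTop T 𝒰 s a) V ↔
      (@IsOpen X T V ∧ (a ∈ V → {n | s n ∈ V} ∈ (𝒰 : Filter ℕ))) := Iff.rfl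

lemma glue_cont_id {X : Type u} {T : TopologicalSpace X} {𝒰 : Ultrafilter ℕ} {s : ℕ → X} {a : X} :
    @Continuous X X T (glueTop T 𝒰 s a) id :=
  continuous_def.mpr (fun _ hV => hV.1)

lemma glue_cont_g {X : Type u} {T : TopologicalSpace X} {𝒰 : Ultrafilter ℕ} {s : ℕ → X} {a : X}
    (h𝒰 : ∀ {A : Set ℕ}, (∀ᶠ n in atTop, n ∈ A) → A ∈ (𝒰 : Filter ℕ))
    {g : X → X} (hg : @Continuous X X T T g)
    (hga : Filter.Tendsto (fun n => g (s n)) atTop (@nhds X T (g a))) :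
    @Continuous X X (glueTop T 𝒰 s a) T g := by
  letI := T
  refine continuous_def.mpr (fun V hV => ?_)
  refine glueTop_isOpen_iff.mpr ⟨hg.isOpen_preimage V hV, fun haV => ?_⟩
  exact h𝒰 (hga (hV.mem_nhds haV))

lemma fc_of_homeomorph {X Y : Type*} {tX : TopologicalSpace X} {tY : TopologicalSpace Y}
    (hfc : @FirstCountableTopology X tX) (h : @Homeomorph X Y tX tY) :
    @FirstCountableTopology Y tY := by
  letI := tX
  letI := tY
  haveI := hfc
  exact h.symm.isEmbedding.firstCountableTopology

lemma glue_fc_aux {X : Type u} {T : TopologicalSpace X} {𝒰 : Ultrafilter ℕ} {s : ℕ → X} {a : X}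
    (hinj : Function.Injective s) (hsa : ∀ n, s n ≠ a)
    (hcl : ∀ W : Set ℕ, @IsClosed X T (s '' W))
    (hfc : @FirstCountableTopology X (glueTop T 𝒰 s a)) :
    (𝒰 : Filter ℕ).IsCountablyGenerated := by
  letI TZ : TopologicalSpace X := glueTop T 𝒰 s a
  haveI := hfc
  have hcomap : (𝒰 : Filter ℕ) = Filter.comap s (𝓝 a) := by
    apply le_antisymm
    · rw [← Filter.map_le_iff_le_comap]
      intro V hV
      obtain ⟨G, hGV, hGopen, haG⟩ := mem_nhds_iff.mp hV
      exact Filter.mem_of_superset ((glueTop_isOpen_iff.mp hGopen).2 haG) (fun n hn => hGV hn)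
    · intro W hW
      refine ⟨(s '' Wᶜ)ᶜ, ?_, ?_⟩
      · refine IsOpen.mem_nhds ?_ ?_
        · refine glueTop_isOpen_iff.mpr ⟨(hcl Wᶜ).isOpen_compl, fun _ => ?_⟩
          refine Filter.mem_of_superset hW (fun n hn hmem => ?_)
          obtain ⟨m, hm1, hm2⟩ := hmem
          exact hm1 (hinj hm2 ▸ hn)
        · intro hmem
          obtain ⟨m, -, hm2⟩ := hmem
          exact hsa m hm2
      · intro n hn
        by_contra hnW
        exact hn ⟨n, hnW, rfl⟩
  rw [hcomap]
  infer_instance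

/-- every weakly reversible metrizable space is reversible. -/
theorem stmt_15 {X : Type u} [TopologicalSpace X] [TopologicalSpace.MetrizableSpace X]
    (hwr : ∀ (Y : Type u) [TopologicalSpace Y] (f : X → Y) (g : Y → X),
      Function.Bijective f → Continuous f → Function.Bijective g → Continuous g →
      Nonempty (X ≃ₜ Y)) :
    ∀ f : X ≃ X, Continuous (⇑f) → Continuous (⇑f.symm) := by
  intro f hf
  rw [continuous_iff_seqContinuous]
  intro y ℓ hy
  by_contra hx
  set a : X := f.symm ℓ with ha
  have hfa : f a = ℓ := f.apply_symm_apply ℓ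
  obtain ⟨V, hV, hVn⟩ : ∃ V ∈ 𝓝 a, ¬ (∀ᶠ n in atTop, (⇑f.symm ∘ y) n ∈ V) := by
    by_contra h
    push_neg at h
    exact hx (fun V hV => h V hV)
  obtain ⟨U, hUV, hUopen, haU⟩ := mem_nhds_iff.mp hV
  have hfreq : ∃ᶠ n in atTop, (⇑f.symm ∘ y) n ∉ U := by
    rw [Filter.not_eventually] at hVn
    exact hVn.mono (fun n hn hU => hn (hUV hU))
  obtain ⟨φ, hφmono, hφ⟩ := Filter.extraction_of_frequently_atTop hfreq
  set s0 : ℕ → X := (⇑f.symm ∘ y) ∘ φ with hs0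
  have hs0U : ∀ n, s0 n ∉ U := hφ
  have hfs0 : Tendsto (fun n => f (s0 n)) atTop (𝓝 (f a)) := by
    have he : ∀ n, f (s0 n) = y (φ n) := fun n => f.apply_symm_apply _
    rw [hfa]
    simp only [he]
    exact hy.comp hφmono.tendsto_atTop
  have claimA0 : ∀ (c : X) (ψ : ℕ → ℕ), Tendsto ψ atTop atTop →
      ¬ Tendsto (fun j => s0 (ψ j)) atTop (𝓝 c) := by
    intro c ψ hψ hc
    have h1 : Tendsto (fun j => f (s0 (ψ j))) atTop (𝓝 (f c)) := (hf.tendsto c).comp hc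
    have h2 : Tendsto (fun j => f (s0 (ψ j))) atTop (𝓝 (f a)) := hfs0.comp hψ
    have hca : c = a := f.injective (tendsto_nhds_unique h1 h2)
    have hcU : c ∈ Uᶜ :=
      hUopen.isClosed_compl.mem_of_tendsto hc
        (Filter.Eventually.of_forall (fun j => hs0U (ψ j)))
    rw [hca] at hcU
    exact hcU haU
  have hrange : (Set.range s0).Infinite := by
    by_contra hfin
    rw [Set.not_infinite] at hfin
    have hfib : ∃ v ∈ Set.range s0, {n | s0 n = v}.Infinite := by
      by_contra hall
      push_neg at hall
      have huniv : (Set.univ : Set ℕ).Finite := by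
        refine Set.Finite.subset (hfin.biUnion (fun v hv => hall v hv)) ?_
        intro k _
        exact Set.mem_biUnion ⟨k, rfl⟩ rfl
      exact Set.infinite_univ huniv
    obtain ⟨v, -, hvinf⟩ := hfib
    set e := Set.Infinite.natEmbedding _ hvinf with he
    have hinj : Function.Injective (fun j => (e j : ℕ)) :=
      fun i j h => e.injective (Subtype.ext h)
    have htend : Tendsto (fun j => (e j : ℕ)) atTop atTop := hinj.nat_tendsto_atTop
    have hconst : Tendsto (fun j => s0 ((e j : ℕ))) atTop (𝓝 v) := by
      have hv : ∀ j, s0 ((e j : ℕ)) = v := fun j => (e j).2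
      simp only [hv]
      exact tendsto_const_nhds
    exact claimA0 v _ htend hconst
  set e2 := Set.Infinite.natEmbedding _ hrange with he2
  have hsel : ∀ j, ∃ m, s0 m = ((e2 j : X)) := fun j => (e2 j).2
  choose ψ hψ using hsel
  set s : ℕ → X := fun j => s0 (ψ j) with hs
  have hsinj : Function.Injective s := by
    intro i j h
    have : (e2 i : X) = (e2 j : X) := by rw [← hψ i, ← hψ j]; exact h
    exact e2.injective (Subtype.ext this)
  have hψinj : Function.Injective ψ := fun i j h => hsinj (by simp only [hs, h])
  have hψt : Tendsto ψ atTop atTop := hψinj.nat_tendsto_atTop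
  have hsU : ∀ n, s n ∉ U := fun n => hs0U (ψ n)
  have hfs : Tendsto (fun n => f (s n)) atTop (𝓝 (f a)) := hfs0.comp hψt
  have claimA : ∀ (c : X) (ψ' : ℕ → ℕ), Tendsto ψ' atTop atTop →
      ¬ Tendsto (fun j => s (ψ' j)) atTop (𝓝 c) := by
    intro c ψ' hψ' hc
    exact claimA0 c (fun j => ψ (ψ' j)) (hψt.comp hψ') hc
  have hsa : ∀ n, s n ≠ a := fun n h => hsU n (h ▸ haU)
  have claimC : ∀ W : Set ℕ, IsClosed (s '' W) := by
    intro W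
    apply IsSeqClosed.isClosed
    intro t z ht htz
    choose n hn1 hn2 using fun k => ht k
    by_cases hrn : (Set.range n).Finite
    · have hfib : ∃ m ∈ Set.range n, {k | n k = m}.Infinite := by
        by_contra hall
        push_neg at hall
        have huniv : (Set.univ : Set ℕ).Finite := by
          refine Set.Finite.subset (hrn.biUnion (fun m hm => hall m hm)) ?_
          intro k _
          exact Set.mem_biUnion ⟨k, rfl⟩ rfl
        exact Set.infinite_univ huniv
      obtain ⟨m, -, hminf⟩ := hfib
      have hmW : m ∈ W := by
        obtain ⟨k0, hk0⟩ := hminf.nonempty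
        rw [← hk0]
        exact hn1 k0
      set e3 := Set.Infinite.natEmbedding _ hminf with he3
      have hinj3 : Function.Injective (fun j => (e3 j : ℕ)) :=
        fun i j h => e3.injective (Subtype.ext h)
      have ht3 : Tendsto (fun j => (e3 j : ℕ)) atTop atTop := hinj3.nat_tendsto_atTop
      have h1 : Tendsto (fun j => t ((e3 j : ℕ))) atTop (𝓝 z) := htz.comp ht3
      have h2 : ∀ j, t ((e3 j : ℕ)) = s m := by
        intro j
        have hej : n ((e3 j : ℕ)) = m := (e3 j).2
        rw [← hn2 ((e3 j : ℕ)), hej]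
      rw [show z = s m from tendsto_nhds_unique (by simpa only [h2] using h1) tendsto_const_nhds]
      exact ⟨m, hmW, rfl⟩
    · exfalso
      have hrinf : (Set.range n).Infinite := hrn
      set e4 := Set.Infinite.natEmbedding _ hrinf with he4
      have hsel4 : ∀ j, ∃ k, n k = ((e4 j : ℕ)) := fun j => (e4 j).2
      choose κ hκ using hsel4
      have hinj4 : Function.Injective (fun j => n (κ j)) := by
        intro i j h
        simp only [hκ] at h
        exact e4.injective (Subtype.ext h)
      have htc : Tendsto (fun j => s (n (κ j))) atTop (𝓝 z) := by
        have hv : ∀ j, s (n (κ j)) = t (κ j) := fun j => hn2 (κ j)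
        have hκinj : Function.Injective κ := fun i j h => hinj4 (by simp only [h])
        simp only [hv]
        exact htz.comp hκinj.nat_tendsto_atTop
      exact claimA z (fun j => n (κ j)) (hinj4.nat_tendsto_atTop) htc
  -- the glued topology along a nonprincipal ultrafilter
  set 𝒰 : Ultrafilter ℕ := Filter.hyperfilter ℕ with h𝒰
  have hid : @Continuous X X _ (glueTop ‹TopologicalSpace X› 𝒰 s a) id := glue_cont_id
  have hfcont : @Continuous X X (glueTop ‹TopologicalSpace X› 𝒰 s a) _ ⇑f := by
    refine glue_cont_g (fun {A} hA => ?_) hf hfs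
    exact Filter.hyperfilter_le_cofinite (by rwa [Nat.cofinite_eq_atTop])
  obtain ⟨h⟩ := @hwr X (glueTop ‹TopologicalSpace X› 𝒰 s a) id ⇑f
    Function.bijective_id hid f.bijective hfcont
  have hFCZ : @FirstCountableTopology X (glueTop ‹TopologicalSpace X› 𝒰 s a) :=
    fc_of_homeomorph inferInstance h
  exact aux_hyperfilter_not_cg (glue_fc_aux hsinj hsa claimC hFCZ)
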